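/- Let (G, ω, μ) be a connected, locally finite weighted graph, let V : G → ℝ, and let T > 0. Let v : G × [0,T] → ℝ be such that for every x ∈ G the map t ↦ v(x,t) is C¹ on [0,T], and suppose that V(x) ∂_t v(x,t) − Δv(x,t) = 0 for all x ∈ G and t ∈ [0,T], where Δ acts in the x-variable. Then for every fixed x ∈ G, for almost every t ∈ [0,T] the map t ↦ v₊(x,t) is differentiable at t and V(x) ∂_t v₊(x,t) − Δv₊(x,t) ≤ 0, where v₊ = max{v, 0}. -/

import Mathlib

open MeasureTheory
open Topology Filter

/-- **Lemma 4.2.** If `v` solves `V ∂ₜ v − Δv = 0` on `G × [0,T]` with `v(x,·)` of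
class `C¹` for every `x`, then for every `x` and a.e. `t ∈ [0,T]` the positive part
`v₊(x,·)` is differentiable at `t` and `V ∂ₜ v₊ − Δv₊ ≤ 0`. -/
theorem stmt5 {G : Type*} [Countable G] [Infinite G]
    (μ : G → ℝ) (ω : G → G → ℝ)
    (hμ : ∀ x, 0 < μ x)
    (hω_symm : ∀ x y, ω x y = ω y x)
    (hω_diag : ∀ x, ω x x = 0)
    (hω_nonneg : ∀ x y, 0 ≤ ω x y)
    (hω_sum : ∀ x, Summable fun y => ω x y)
    (hloc : ∀ x : G, {y : G | 0 < ω x y}.Finite)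
    (hconn : ∀ x y : G, x ≠ y → ∃ (n : ℕ) (p : ℕ → G),
      p 0 = x ∧ p n = y ∧ ∀ i < n, 0 < ω (p i) (p (i + 1)))
    (V : G → ℝ)
    (T : ℝ) (hT : 0 < T)
    (v : G → ℝ → ℝ)
    (hC1 : ∀ x : G, ContDiffOn ℝ 1 (v x) (Set.Icc 0 T))
    (heq : ∀ x : G, ∀ t ∈ Set.Icc (0 : ℝ) T,
      V x * derivWithin (v x) (Set.Icc 0 T) t
        - (μ x)⁻¹ * (∑' y, ω x y * (v y t - v x t)) = 0) :
    ∀ x : G, ∀ᵐ t ∂(volume.restrict (Set.Icc (0 : ℝ) T)),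
      DifferentiableWithinAt ℝ (fun τ => max (v x τ) 0) (Set.Icc (0 : ℝ) T) t ∧
      V x * derivWithin (fun τ => max (v x τ) 0) (Set.Icc (0 : ℝ) T) t
        - (μ x)⁻¹ * (∑' y, ω x y * (max (v y t) 0 - max (v x t) 0)) ≤ 0 := by
  intro x
  set I : Set ℝ := Set.Icc (0 : ℝ) T with hI
  have hud : UniqueDiffOn ℝ I := uniqueDiffOn_Icc hT
  have hdv : ∀ t ∈ I, HasDerivWithinAt (v x) (derivWithin (v x) I t) I t := by
    intro t ht
    exact (((hC1 x).differentiableOn one_ne_zero) t ht).hasDerivWithinAt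
  -- summability helper
  have hsum : ∀ g : G → ℝ, Summable fun y => ω x y * g y := by
    intro g
    apply summable_of_ne_finset_zero (s := (hloc x).toFinset)
    intro y hy
    have : ¬ 0 < ω x y := by simpa using hy
    have : ω x y = 0 := le_antisymm (not_lt.1 this) (hω_nonneg x y)
    simp [this]
  -- bad set
  set S : Set ℝ := {t | t ∈ I ∧ v x t = 0 ∧ derivWithin (v x) I t ≠ 0} with hS
  have hScnt : S.Countable := by
    have hdisc : DiscreteTopology S := by
      rw [discreteTopology_subtype_iff]
      intro t ht
      by_contra hne
      haveI : (𝓝[≠] t ⊓ Filter.principal S).NeBot := ⟨hne⟩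
      obtain ⟨htI, htv, htd⟩ := ht
      have hF : 𝓝[≠] t ⊓ Filter.principal S ≤ 𝓝[I \ {t}] t := by
        rw [nhdsWithin, nhdsWithin, inf_assoc, Filter.inf_principal]
        refine inf_le_inf_left _ (Filter.principal_mono.2 ?_)
        intro s hs
        exact ⟨hs.2.1, hs.1⟩
      have h1 : Filter.Tendsto (slope (v x) t) (𝓝[≠] t ⊓ Filter.principal S)
          (𝓝 (derivWithin (v x) I t)) :=
        (hasDerivWithinAt_iff_tendsto_slope.1 (hdv t htI)).mono_left hF
      have h2 : Filter.Tendsto (slope (v x) t) (𝓝[≠] t ⊓ Filter.principal S) (𝓝 0) := by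
        refine Filter.Tendsto.congr' ?_ tendsto_const_nhds
        refine (Filter.eventually_inf_principal.2 (Filter.Eventually.of_forall ?_))
        intro s hs
        simp [slope, hs.2.1, htv]
      exact htd (tendsto_nhds_unique h1 h2)
    have : Countable S := TopologicalSpace.separableSpace_iff_countable.1 inferInstance
    exact Set.countable_coe_iff.1 this
  have hSnull : ∀ᵐ t ∂volume, t ∉ S :=
    measure_eq_zero_iff_ae_notMem.1 (hScnt.measure_zero volume)
  filter_upwards [ae_restrict_mem measurableSet_Icc, ae_restrict_of_ae hSnull] with t ht htS
  -- main pointwise argument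
  rcases lt_trichotomy (v x t) 0 with hvt | hvt | hvt
  · -- v x t < 0 : locally v₊ = 0
    have hcont : ContinuousWithinAt (v x) I t := ((hC1 x).continuousOn) t ht
    have hev : ∀ᶠ s in nhdsWithin t I, v x s < 0 := hcont.eventually (eventually_lt_nhds hvt)
    have heqe : (fun τ => max (v x τ) 0) =ᶠ[nhdsWithin t I] (fun _ => (0 : ℝ)) :=
      hev.mono fun s hs => max_eq_right hs.le
    have hderiv : HasDerivWithinAt (fun τ => max (v x τ) 0) 0 I t :=
      (hasDerivWithinAt_const t I 0).congr_of_eventuallyEq heqe (max_eq_right hvt.le)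
    refine ⟨hderiv.differentiableWithinAt, ?_⟩
    rw [hderiv.derivWithin (hud t ht), max_eq_right hvt.le]
    have : 0 ≤ ∑' y, ω x y * (max (v y t) 0 - 0) :=
      tsum_nonneg fun y => mul_nonneg (hω_nonneg x y) (by simp [le_max_right])
    have hμ' : 0 ≤ (μ x)⁻¹ := le_of_lt (inv_pos.2 (hμ x))
    nlinarith [mul_nonneg hμ' this]
  · -- v x t = 0 ; then derivWithin = 0 since t ∉ S
    have hd0 : derivWithin (v x) I t = 0 := by
      by_contra hd
      exact htS ⟨ht, hvt, hd⟩
    have hderiv : HasDerivWithinAt (fun τ => max (v x τ) 0) 0 I t := by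
      rw [hasDerivWithinAt_iff_isLittleO]
      have h1 : (fun s => v x s - v x t - (s - t) • derivWithin (v x) I t)
          =o[nhdsWithin t I] fun s => s - t := hasDerivWithinAt_iff_isLittleO.1 (hdv t ht)
      rw [hd0] at h1
      simp only [smul_zero, sub_zero] at h1 ⊢
      refine Asymptotics.IsBigO.trans_isLittleO ?_ h1
      refine Asymptotics.isBigO_of_le _ fun s => ?_
      simpa [Real.norm_eq_abs] using abs_max_sub_max_le_abs (v x s) (v x t) 0
    refine ⟨hderiv.differentiableWithinAt, ?_⟩
    rw [hderiv.derivWithin (hud t ht), hvt, max_self]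
    have : 0 ≤ ∑' y, ω x y * (max (v y t) 0 - 0) :=
      tsum_nonneg fun y => mul_nonneg (hω_nonneg x y) (by simp [le_max_right])
    have hμ' : 0 ≤ (μ x)⁻¹ := le_of_lt (inv_pos.2 (hμ x))
    nlinarith [mul_nonneg hμ' this]
  · -- v x t > 0 : locally v₊ = v
    have hcont : ContinuousWithinAt (v x) I t := ((hC1 x).continuousOn) t ht
    have hev : ∀ᶠ s in nhdsWithin t I, 0 < v x s := hcont.eventually (eventually_gt_nhds hvt)
    have heqe : (fun τ => max (v x τ) 0) =ᶠ[nhdsWithin t I] (v x) :=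
      hev.mono fun s hs => max_eq_left hs.le
    have hderiv : HasDerivWithinAt (fun τ => max (v x τ) 0) (derivWithin (v x) I t) I t :=
      (hdv t ht).congr_of_eventuallyEq heqe (max_eq_left hvt.le)
    refine ⟨hderiv.differentiableWithinAt, ?_⟩
    rw [hderiv.derivWithin (hud t ht)]
    have h0 := heq x t ht
    have hVd : V x * derivWithin (v x) I t = (μ x)⁻¹ * ∑' y, ω x y * (v y t - v x t) := by
      linarith
    rw [hVd, max_eq_left hvt.le]
    have hle : (∑' y, ω x y * (v y t - v x t)) ≤ ∑' y, ω x y * (max (v y t) 0 - v x t) := by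
      refine Summable.tsum_le_tsum (fun y => ?_) (hsum _) (hsum _)
      exact mul_le_mul_of_nonneg_left (sub_le_sub_right (le_max_left _ _) _) (hω_nonneg x y)
    have hμ' : 0 ≤ (μ x)⁻¹ := le_of_lt (inv_pos.2 (hμ x))
    have := mul_le_mul_of_nonneg_left hle hμ'
    linarith
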